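/- Let φ be an unsatisfiable CNF over variables x_1, …, x_N in which every clause has exactly three literals on three pairwise distinct variables, and let Ψ = Φ₁ ∧ Φ₂ be its lifted CNF. Let F be a field, let σ be any variable order on the variables of Ψ, let v_{j_1} < ⋯ < v_{j_N} be the order σ induces on the v-variables, and let τ be any bijection from {v_1, …, v_N} to {x_1, …, x_N}. If the standard translation of Ψ has an roABP-IPS_LIN refutation over F of width w in order σ, then the standard translation of φ has an roABP-IPS_LIN refutation over F of width at most w in the variable order τ(v_{j_1}) < τ(v_{j_2}) < ⋯ < τ(v_{j_N}). -/

import Mathlib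

set_option synthInstance.maxHeartbeats 1000000

/-- A polynomial `f` is computed by a width-`w` roABP in variable order `σ`. -/
def ROABP {F : Type} [Field F] {V : Type} [Fintype V] {n : ℕ}
    (σ : Fin n ≃ V) (w : ℕ) (f : MvPolynomial V F) : Prop :=
  ∃ (hw : 0 < w) (M : Fin n → Matrix (Fin w) (Fin w) (MvPolynomial V F)),
    (∀ k i j, M k i j ∈ MvPolynomial.supported F ({σ k} : Set V)) ∧
    f = (List.ofFn M).prod ⟨0, hw⟩ ⟨0, hw⟩

/-- An roABP-IPS_LIN refutation of the family `f` of width `w` in order `σ`. -/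
def IPSLinRefutation {F : Type} [Field F] {V : Type} [Fintype V] {n : ℕ}
    (σ : Fin n ≃ V) (w : ℕ) {ι : Type} [Fintype ι]
    (f : ι → MvPolynomial V F) : Prop :=
  ∃ (g : ι → MvPolynomial V F) (h : V → MvPolynomial V F),
    (∀ i, ROABP σ w (g i)) ∧ (∀ v, ROABP σ w (h v)) ∧
    (∑ i, g i * f i) + (∑ v, h v * (MvPolynomial.X v ^ 2 - MvPolynomial.X v)) = 1

noncomputable def clausePoly {F : Type} [Field F] {V : Type} (C : Finset (V × Bool)) :
    MvPolynomial V F :=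
  ∏ l ∈ C, if l.2 then (1 - MvPolynomial.X l.1) else MvPolynomial.X l.1

/-- A triple of pairwise distinct indices in `Fin N` (given as an injective map). -/
abbrev LTriple (N : ℕ) := {T : Fin 3 → Fin N // Function.Injective T}

/-- The variables of the lifted CNF: `N` main variables `v_i` plus one selector
variable `u_{t,T}` for every clause index `t` and every triple `T` of distinct indices. -/
abbrev LVar (N M : ℕ) := Fin N ⊕ (Fin M × LTriple N)

instance (N M : ℕ) : DecidableEq (Finset (LVar N M × Bool)) :=
  Finset.decidableEq

/-- Compatibility of two selectors: the union of their associated partial maps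
(`v_{T r} ↦ var(ℓ_{t,r})`) is a one-to-one partial function. -/
def LCompatible {N M : ℕ} (ℓ : Fin M → Fin 3 → Fin N × Bool)
    (t : Fin M) (T : LTriple N) (t' : Fin M) (T' : LTriple N) : Prop :=
  ∀ r r' : Fin 3,
    (T.1 r = T'.1 r' → (ℓ t r).1 = (ℓ t' r').1) ∧
    ((ℓ t r).1 = (ℓ t' r').1 → T.1 r = T'.1 r')

instance {N M : ℕ} (ℓ : Fin M → Fin 3 → Fin N × Bool)
    (t : Fin M) (T : LTriple N) (t' : Fin M) (T' : LTriple N) :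
    Decidable (LCompatible ℓ t T t' T') := by
  unfold LCompatible; infer_instance

/-- The clauses of `Φ₁`: for each clause index `t` and triple `T`, the clause
`¬u_{t,T} ∨ v_{T 0}^{sign ℓ_{t,0}} ∨ v_{T 1}^{sign ℓ_{t,1}} ∨ v_{T 2}^{sign ℓ_{t,2}}`. -/
def PhiOne {N M : ℕ} (ℓ : Fin M → Fin 3 → Fin N × Bool) :
    Finset (Finset (LVar N M × Bool)) :=
  Finset.image (fun tT : Fin M × LTriple N =>
    insert ((Sum.inr tT : LVar N M), false)
      (Finset.image (fun r : Fin 3 =>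
        ((Sum.inl (tT.2.1 r) : LVar N M), (ℓ tT.1 r).2)) Finset.univ))
    Finset.univ

/-- The clauses of `Φ₂`: for each `t` the clause `∨_T u_{t,T}`; for each `t` and
distinct triples `T ≠ T'` the clause `¬u_{t,T} ∨ ¬u_{t,T'}`; and for each
incompatible pair of selectors the clause `¬u_{t,T} ∨ ¬u_{t',T'}`. -/
def PhiTwo {N M : ℕ} (ℓ : Fin M → Fin 3 → Fin N × Bool) :
    Finset (Finset (LVar N M × Bool)) :=
  (Finset.image (fun t : Fin M =>
      Finset.image (fun T : LTriple N =>
        ((Sum.inr (t, T) : LVar N M), true)) Finset.univ)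
    Finset.univ)
  ∪
  (Finset.image (fun x : (Fin M × LTriple N) × (Fin M × LTriple N) =>
      ({((Sum.inr x.1 : LVar N M), false), ((Sum.inr x.2 : LVar N M), false)} :
        Finset (LVar N M × Bool)))
    (Finset.univ.filter (fun x : (Fin M × LTriple N) × (Fin M × LTriple N) =>
      (x.1.1 = x.2.1 ∧ x.1.2 ≠ x.2.2) ∨
      ¬ LCompatible ℓ x.1.1 x.1.2 x.2.1 x.2.2)))

lemma aux_grouping {A : Type*} [Monoid A] (f : ℕ → A) (b : ℕ → ℕ) (hb : Monotone b)
    (hb0 : b 0 = 0) (N : ℕ) :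
    (List.ofFn (fun r : Fin N => ((List.range' (b r) (b (r + 1) - b r)).map f).prod)).prod
      = ((List.range (b N)).map f).prod := by
  induction N with
  | zero => simp [hb0]
  | succ N ih =>
      rw [List.ofFn_succ', List.prod_concat]
      simp only [Fin.coe_castSucc, Fin.val_last]
      rw [ih]
      have h1 : b (N + 1) = b N + (b (N + 1) - b N) := by
        have := hb (Nat.le_add_right N 1); omega
      rw [h1, List.range_add, List.map_append, List.prod_append,
        List.range'_eq_map_range]
      simp

lemma aux_prod_entries {F R : Type*} [CommSemiring F] [CommSemiring R] [Algebra F R]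
    {w : ℕ} (S : Subalgebra F R) (L : List (Matrix (Fin w) (Fin w) R))
    (h : ∀ A ∈ L, ∀ i j, A i j ∈ S) : ∀ i j, L.prod i j ∈ S := by
  induction L with
  | nil =>
      intro i j
      simp only [List.prod_nil, Matrix.one_apply]
      split
      · exact one_mem S
      · exact zero_mem S
  | cons A L ih =>
      intro i j
      rw [List.prod_cons, Matrix.mul_apply]
      exact Subalgebra.sum_mem _ fun k _ => mul_mem (h A List.mem_cons_self i k)
        (ih (fun B hB => h B (List.mem_cons_of_mem _ hB)) k j)

lemma aux_aeval_supported {F V W : Type*} [CommSemiring F] {s : Set V} {S : Set W}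
    (sub : V → MvPolynomial W F) (hsub : ∀ v ∈ s, sub v ∈ MvPolynomial.supported F S)
    {p : MvPolynomial V F} (hp : p ∈ MvPolynomial.supported F s) :
    MvPolynomial.aeval sub p ∈ MvPolynomial.supported F S := by
  rw [MvPolynomial.supported_eq_adjoin_X] at hp
  induction hp using Algebra.adjoin_induction with
  | mem x hx =>
      obtain ⟨v, hv, rfl⟩ := hx
      simpa using hsub v hv
  | algebraMap r => rw [AlgHom.commutes]; exact Subalgebra.algebraMap_mem _ r
  | add x y hx hy ihx ihy => simpa [map_add] using add_mem ihx ihy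
  | mul x y hx hy ihx ihy => simpa [map_mul] using mul_mem ihx ihy

lemma aux_roabp_transfer {F : Type} [Field F] {V W : Type} [Fintype V] [Fintype W]
    {n m : ℕ} (σ : Fin n ≃ V) (σ' : Fin m ≃ W) (s : V → MvPolynomial W F)
    (b : ℕ → ℕ) (hmono : Monotone b) (hb0 : b 0 = 0) (hbm : b m = n)
    (hs : ∀ (r : Fin m) (k : ℕ) (hk : k < n), b r ≤ k → k < b (r + 1) →
      s (σ ⟨k, hk⟩) ∈ MvPolynomial.supported F ({σ' r} : Set W))
    {w : ℕ} {g : MvPolynomial V F} (hg : ROABP σ w g) :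
    ROABP σ' w (MvPolynomial.aeval s g) := by
  obtain ⟨hw, Mats, hsupp, hval⟩ := hg
  set Φ : MvPolynomial V F →ₐ[F] MvPolynomial W F := MvPolynomial.aeval s with hΦ
  set f : ℕ → Matrix (Fin w) (Fin w) (MvPolynomial W F) :=
    fun k => if h : k < n then (Mats ⟨k, h⟩).map Φ else 1 with hf
  refine ⟨hw, fun r => ((List.range' (b r) (b (r + 1) - b r)).map f).prod, ?_, ?_⟩
  · intro r i j
    refine aux_prod_entries _ _ ?_ i j
    intro A hA i j
    simp only [List.mem_map, List.mem_range'_1] at hA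
    obtain ⟨k, ⟨hk1, hk2⟩, rfl⟩ := hA
    have hub : b (↑r + 1) ≤ n := by
      rw [← hbm]; exact hmono (by omega)
    have hk2' : k < b (↑r + 1) := by
      have : b ↑r ≤ b (↑r + 1) := hmono (by omega)
      omega
    have hkn : k < n := lt_of_lt_of_le hk2' hub
    rw [hf]
    simp only [hkn, dif_pos]
    rw [Matrix.map_apply]
    refine aux_aeval_supported _ ?_ (by simpa using hsupp ⟨k, hkn⟩ i j)
    rintro v rfl
    exact hs r k hkn hk1 hk2'
  · have hlist : (List.ofFn Mats).map (fun A => A.map Φ) = (List.range n).map f := by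
      apply List.ext_getElem
      · simp
      · intro i h1 h2
        simp only [List.getElem_map, List.getElem_ofFn, List.getElem_range]
        have hi : i < n := by simpa using h2
        simp [hf, hi]
    have := aux_grouping f b hmono hb0 m
    rw [hbm] at this
    rw [this, ← hlist]
    have hfn : (fun A : Matrix (Fin w) (Fin w) (MvPolynomial V F) => A.map ⇑Φ)
        = ⇑(AlgHom.mapMatrix Φ : Matrix (Fin w) (Fin w) (MvPolynomial V F)
            →ₐ[F] Matrix (Fin w) (Fin w) (MvPolynomial W F)) :=
      funext fun A => (AlgHom.mapMatrix_apply Φ A).symm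
    rw [hfn, ← map_list_prod, hval]
    simp [AlgHom.mapMatrix_apply, Matrix.map_apply]

/-- Any width-$w$ roABP-IPS_LIN refutation of the standard
translation of the lifted CNF $Ψ = Φ₁ ∧ Φ₂$, in an arbitrary variable order $σ$,
yields a width-$≤ w$ roABP-IPS_LIN refutation of the standard translation of the
original 3-CNF $φ$ in the variable order $τ(v_{j_1}) < ⋯ < τ(v_{j_N})$, where
$v_{j_1} < ⋯ < v_{j_N}$ is the order $σ$ induces on the $v$-variables and $τ$ is
any bijection from the $v$-variables to the $x$-variables. -/
theorem stmt_13 (N M : ℕ) (ℓ : Fin M → Fin 3 → Fin N × Bool)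
    -- each clause of φ has its three literals on pairwise distinct variables
    (hdist : ∀ t : Fin M, Function.Injective fun r : Fin 3 => (ℓ t r).1)
    -- φ is unsatisfiable
    (hunsat : ¬ ∃ x : Fin N → Bool, ∀ t : Fin M, ∃ r : Fin 3, x (ℓ t r).1 = (ℓ t r).2)
    (F : Type) [Field F]
    (σ : Fin (Fintype.card (LVar N M)) ≃ LVar N M)
    -- j enumerates the v-variables in the order induced by σ
    (j : Fin N ≃ Fin N)
    (hj : StrictMono fun r : Fin N =>
      (σ.symm (Sum.inl (j r)) : Fin (Fintype.card (LVar N M))))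
    -- τ is an arbitrary bijection from the v-variables to the x-variables
    (τ : Fin N ≃ Fin N)
    (w : ℕ)
    (href : IPSLinRefutation σ w
      (fun C : ↥(PhiOne ℓ ∪ PhiTwo ℓ) => clausePoly (F := F) C.1)) :
    ∃ w' ≤ w, IPSLinRefutation (j.trans τ) w'
      (fun t : Fin M =>
        clausePoly (F := F)
          (Finset.image (fun r : Fin 3 => ℓ t r) Finset.univ)) := by

  rcases Nat.eq_zero_or_pos N with hN0 | hN
  · subst hN0
    exact absurd ⟨fun i => i.elim0, fun t => ((ℓ t 0).1).elim0⟩ hunsat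
  obtain ⟨g, h, hg, hh, heq⟩ := href
  obtain ⟨hw, -⟩ := hh (Sum.inl ⟨0, hN⟩)
  have hchinj : ∀ t : Fin M, Function.Injective (fun r : Fin 3 => τ.symm (ℓ t r).1) :=
    fun t a bb hab => hdist t (τ.symm.injective hab)
  set ch : Fin M → LTriple N := fun t => ⟨fun r => τ.symm (ℓ t r).1, hchinj t⟩ with hch
  set sub0 : LVar N M → MvPolynomial (Fin N) F := fun v =>
    Sum.elim (fun i => MvPolynomial.X (τ i))
      (fun a : Fin M × LTriple N =>
        if a.2 = ch a.1 then (1 : MvPolynomial (Fin N) F) else 0) v with hsub0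
  set Φ : MvPolynomial (LVar N M) F →ₐ[F] MvPolynomial (Fin N) F :=
    MvPolynomial.aeval sub0 with hΦ
  set Cl : Fin M → Finset (LVar N M × Bool) := fun t =>
    insert ((Sum.inr (t, ch t) : LVar N M), false)
      (Finset.image (fun r : Fin 3 =>
        ((Sum.inl ((ch t).1 r) : LVar N M), (ℓ t r).2)) Finset.univ) with hCl
  have hClmem : ∀ t, Cl t ∈ PhiOne ℓ ∪ PhiTwo ℓ := fun t =>
    Finset.mem_union_left _ (Finset.mem_image.2 ⟨(t, ch t), Finset.mem_univ _, rfl⟩)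
  set e : Fin M → ↥(PhiOne ℓ ∪ PhiTwo ℓ) := fun t => ⟨Cl t, hClmem t⟩ with he
  -- Φ of X
  have hΦX : ∀ v, Φ (MvPolynomial.X v) = sub0 v := fun v => MvPolynomial.aeval_X _ v
  -- K2b : value of Φ on the chosen clauses
  have hK2b : ∀ t, Φ (clausePoly (Cl t)) =
      clausePoly (Finset.image (fun r : Fin 3 => ℓ t r) Finset.univ) := by
    intro t
    have hhead : ((Sum.inr (t, ch t) : LVar N M), false) ∉
        Finset.image (fun r : Fin 3 =>
          ((Sum.inl ((ch t).1 r) : LVar N M), (ℓ t r).2)) Finset.univ := by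
      intro hmem
      obtain ⟨r, -, hr⟩ := Finset.mem_image.1 hmem
      exact absurd (congrArg Prod.fst hr) (by simp)
    have himginj : Function.Injective (fun r : Fin 3 =>
        ((Sum.inl ((ch t).1 r) : LVar N M), (ℓ t r).2)) := by
      intro a bb hab
      exact (ch t).2 (Sum.inl.inj (congrArg Prod.fst hab))
    rw [hCl]
    simp only []
    rw [clausePoly, Finset.prod_insert hhead, map_mul, map_prod]
    have h1 : Φ (if false then 1 - MvPolynomial.X ((Sum.inr (t, ch t) : LVar N M))
        else MvPolynomial.X ((Sum.inr (t, ch t) : LVar N M))) = 1 := by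
      simp [hΦX, hsub0]
    rw [h1, one_mul]
    rw [Finset.prod_image (fun a _ bb _ hab => himginj hab)]
    have hrhsinj : Function.Injective (fun r : Fin 3 => ℓ t r) := by
      intro a bb hab
      exact hdist t (congrArg Prod.fst hab)
    rw [clausePoly, Finset.prod_image (fun a _ bb _ hab => hrhsinj hab)]
    refine Finset.prod_congr rfl fun r _ => ?_
    by_cases hsg : (ℓ t r).2 <;>
      simp [hsg, hΦX, hsub0, hch, Equiv.apply_symm_apply, map_sub, map_one]
  -- vanishing of Φ on all other clauses
  have hvanish : ∀ C ∈ PhiOne ℓ ∪ PhiTwo ℓ, (∀ t, C ≠ Cl t) → Φ (clausePoly C) = 0 := by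
    intro C hC hne
    rw [clausePoly, map_prod]
    rcases Finset.mem_union.1 hC with h1 | h2
    · obtain ⟨⟨t, T⟩, -, rfl⟩ := Finset.mem_image.1 h1
      have hT : T ≠ ch t := by
        intro hT
        exact hne t (by rw [hCl]; simp only []; rw [hT])
      refine Finset.prod_eq_zero (Finset.mem_insert_self _ _) ?_
      simp only [Bool.false_eq_true, ite_false, hΦX, hsub0, Sum.elim_inr]
      exact if_neg hT
    · rcases Finset.mem_union.1 h2 with h2a | h2b
      · obtain ⟨t, -, rfl⟩ := Finset.mem_image.1 h2a
        refine Finset.prod_eq_zero (Finset.mem_image.2 ⟨ch t, Finset.mem_univ _, rfl⟩) ?_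
        simp only [ite_true, map_sub, map_one, hΦX, hsub0, Sum.elim_inr, if_pos rfl]
        ring
      · obtain ⟨x, hmemf, rfl⟩ := Finset.mem_image.1 h2b
        rw [Finset.mem_filter] at hmemf
        have hcond := hmemf.2
        have hnotboth : x.1.2 ≠ ch x.1.1 ∨ x.2.2 ≠ ch x.2.1 := by
          by_contra hcontra
          push_neg at hcontra
          obtain ⟨ha, hb⟩ := hcontra
          rcases hcond with ⟨heq1, hne2⟩ | hinc
          · exact hne2 (by rw [ha, hb, heq1])
          · apply hinc
            rw [ha, hb]
            intro r r'
            constructor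
            · intro hTT
              have : τ.symm (ℓ x.1.1 r).1 = τ.symm (ℓ x.2.1 r').1 := hTT
              exact τ.symm.injective this
            · intro hv
              show τ.symm (ℓ x.1.1 r).1 = τ.symm (ℓ x.2.1 r').1
              rw [hv]
        rcases hnotboth with hna | hnb
        · refine Finset.prod_eq_zero (Finset.mem_insert_self _ _) ?_
          simp only [Bool.false_eq_true, ite_false, hΦX, hsub0, Sum.elim_inr]
          exact if_neg hna
        · refine Finset.prod_eq_zero
            (Finset.mem_insert_of_mem (Finset.mem_singleton_self _)) ?_
          simp only [Bool.false_eq_true, ite_false, hΦX, hsub0, Sum.elim_inr]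
          exact if_neg hnb
  -- injectivity of Cl
  have hClinj : Function.Injective Cl := by
    intro t t' hCt
    have hmem : ((Sum.inr (t, ch t) : LVar N M), false) ∈ Cl t' := by
      rw [← hCt, hCl]; exact Finset.mem_insert_self _ _
    rw [hCl] at hmem
    simp only [Finset.mem_insert, Finset.mem_image] at hmem
    rcases hmem with h1 | ⟨r, -, hr⟩
    · have := congrArg Prod.fst h1
      simp only at this
      exact (Prod.mk.injEq .. ▸ Sum.inr.inj this).1
    · exact absurd (congrArg Prod.fst hr) (by simp)
  have heinj : Function.Injective e := fun t t' hte =>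
    hClinj (congrArg Subtype.val hte)
  -- sum over clauses
  have hA : ∑ C : ↥(PhiOne ℓ ∪ PhiTwo ℓ), Φ (g C) * Φ (clausePoly C.1)
      = ∑ t, Φ (g (e t)) *
          clausePoly (Finset.image (fun r : Fin 3 => ℓ t r) Finset.univ) := by
    symm
    calc ∑ t, Φ (g (e t)) *
          clausePoly (Finset.image (fun r : Fin 3 => ℓ t r) Finset.univ)
        = ∑ t, Φ (g (e t)) * Φ (clausePoly ((e t) : Finset (LVar N M × Bool))) := by
          refine Finset.sum_congr rfl fun t _ => ?_
          rw [show ((e t : Finset (LVar N M × Bool))) = Cl t from rfl, hK2b t]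
      _ = ∑ C ∈ Finset.univ.image e, Φ (g C) * Φ (clausePoly C.1) := by
          rw [Finset.sum_image (fun a _ bb _ hab => heinj hab)]
      _ = ∑ C, Φ (g C) * Φ (clausePoly C.1) := by
          refine Finset.sum_subset (Finset.subset_univ _) ?_
          intro C _ hC
          have hz : Φ (clausePoly C.1) = 0 := by
            refine hvanish C.1 C.2 fun t hCt => ?_
            exact hC (Finset.mem_image.2 ⟨t, Finset.mem_univ _, Subtype.ext hCt.symm⟩)
          rw [hz, mul_zero]
  -- sum of boolean axioms
  have hB : ∑ v : LVar N M, Φ (h v) * Φ (MvPolynomial.X v ^ 2 - MvPolynomial.X v)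
      = ∑ x : Fin N, Φ (h (Sum.inl (τ.symm x))) *
          (MvPolynomial.X x ^ 2 - MvPolynomial.X x) := by
    have hbool : ∀ v, Φ (MvPolynomial.X v ^ 2 - MvPolynomial.X v)
        = sub0 v ^ 2 - sub0 v := by
      intro v; rw [map_sub, map_pow, hΦX]
    rw [Fintype.sum_sum_type]
    have h2 : ∑ a : Fin M × LTriple N,
        Φ (h (Sum.inr a)) * Φ (MvPolynomial.X (Sum.inr a : LVar N M) ^ 2
          - MvPolynomial.X (Sum.inr a : LVar N M)) = 0 := by
      refine Finset.sum_eq_zero fun a _ => ?_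
      have hz : Φ (MvPolynomial.X (Sum.inr a : LVar N M) ^ 2
          - MvPolynomial.X (Sum.inr a : LVar N M)) = 0 := by
        rw [hbool]
        simp only [hsub0, Sum.elim_inr]
        split_ifs <;> ring
      rw [hz, mul_zero]
    rw [h2, add_zero]
    refine Fintype.sum_equiv τ _ _ fun i => ?_
    rw [hbool]
    simp only [hsub0, Sum.elim_inl, Equiv.symm_apply_apply]
  -- order data
  set p : Fin N → ℕ := fun r => ((σ.symm (Sum.inl (j r)) : Fin (Fintype.card (LVar N M))) : ℕ) with hpdef
  have hpmono : StrictMono p := by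
    intro a c hac
    simp only [hpdef]
    exact Fin.lt_def.mp (hj hac)
  have hplt : ∀ r, p r < (Fintype.card (LVar N M)) := fun r => (σ.symm (Sum.inl (j r))).isLt
  set p' : ℕ → ℕ := fun x => if hx : x < N then p ⟨x, hx⟩ else (Fintype.card (LVar N M)) with hp'def
  have hp'lt : ∀ x, x < N → p' x < (Fintype.card (LVar N M)) := by
    intro x hx
    simp only [hp'def, dif_pos hx]
    exact hplt _
  have hp'mono : Monotone p' := by
    intro x y hxy
    by_cases hy : y < N
    · have hx : x < N := lt_of_le_of_lt hxy hy
      simp only [hp'def, dif_pos hx, dif_pos hy]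
      exact hpmono.monotone (Fin.mk_le_mk.2 hxy)
    · simp only [hp'def, dif_neg hy]
      by_cases hx : x < N
      · simp only [dif_pos hx]
        exact le_of_lt (hplt _)
      · simp only [dif_neg hx]
        exact le_refl _
  set b : ℕ → ℕ := fun x => if x = 0 then 0 else if N ≤ x then (Fintype.card (LVar N M))
    else p' (x - 1) + 1 with hbdef
  have hb0 : b 0 = 0 := by simp [hbdef]
  have hbN : b N = (Fintype.card (LVar N M)) := by
    simp only [hbdef]
    rw [if_neg (by omega), if_pos (le_refl N)]
  have hbmono : Monotone b := by
    refine monotone_nat_of_le_succ fun x => ?_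
    simp only [hbdef]
    by_cases h0 : x = 0
    · subst h0
      rw [if_pos rfl]
      exact Nat.zero_le _
    · rw [if_neg h0, if_neg (by omega : ¬x + 1 = 0)]
      by_cases hN1 : N ≤ x
      · rw [if_pos hN1, if_pos (by omega)]
      · rw [if_neg hN1]
        by_cases hN2 : N ≤ x + 1
        · rw [if_pos hN2]
          exact Nat.succ_le_of_lt (hp'lt (x - 1) (by omega))
        · rw [if_neg hN2]
          have hmx : x + 1 - 1 = x := by omega
          rw [hmx]
          have := hp'mono (show x - 1 ≤ x by omega)
          omega
  have hbucket : ∀ (r r'' : Fin N), b r ≤ p r'' → p r'' < b (↑r + 1) → r'' = r := by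
    intro r r'' h1 h2
    have hpr'' : p r'' = p' r''.1 := by
      simp only [hp'def, dif_pos r''.isLt, Fin.eta]
    have hprr : p' r.1 = p r := by
      simp only [hp'def, dif_pos r.isLt, Fin.eta]
    have hup : r''.1 ≤ r.1 := by
      by_cases hc : N ≤ r.1 + 1
      · have := r''.isLt; omega
      · have hb2 : b (r.1 + 1) = p' (r.1 + 1 - 1) + 1 := by
          simp only [hbdef]
          rw [if_neg (by omega), if_neg hc]
        have hmx : r.1 + 1 - 1 = r.1 := by omega
        rw [hb2, hmx] at h2
        have hple : p r'' ≤ p r := by omega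
        exact (hpmono.le_iff_le).1 hple
    have hlow : r.1 ≤ r''.1 := by
      by_cases hc : r.1 = 0
      · omega
      · have hb1 : b r.1 = p' (r.1 - 1) + 1 := by
          simp only [hbdef]
          rw [if_neg hc, if_neg (by have := r.isLt; omega)]
        rw [hb1, hpr''] at h1
        by_contra hcon
        have hmm : p' r''.1 ≤ p' (r.1 - 1) := hp'mono (by omega)
        omega
    exact Fin.ext (le_antisymm hup hlow)
  -- the substitution respects the buckets
  have hs' : ∀ (r : Fin N) (k : ℕ) (hk : k < (Fintype.card (LVar N M))), b ↑r ≤ k → k < b (↑r + 1) →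
      sub0 (σ ⟨k, hk⟩) ∈ MvPolynomial.supported F ({(j.trans τ) r} : Set (Fin N)) := by
    intro r k hk h1 h2
    rcases hσk : σ ⟨k, hk⟩ with i | a
    · have hσsymm : σ.symm (Sum.inl i) = ⟨k, hk⟩ := by
        rw [← hσk, Equiv.symm_apply_apply]
      have hpk : p (j.symm i) = k := by
        simp only [hpdef, Equiv.apply_symm_apply, hσsymm]
      have hkey : j.symm i = r := hbucket r (j.symm i) (hpk ▸ h1) (hpk ▸ h2)
      have hij : i = j r := by rw [← hkey, Equiv.apply_symm_apply]
      simp only [hsub0, Sum.elim_inl, hij]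
      exact MvPolynomial.X_mem_supported.2 (by simp [Equiv.trans_apply])
    · simp only [hsub0, Sum.elim_inr]
      split_ifs
      · exact one_mem _
      · exact zero_mem _
  -- assemble
  refine ⟨w, le_refl w, fun t => Φ (g (e t)),
    fun x => Φ (h (Sum.inl (τ.symm x))), ?_, ?_, ?_⟩
  · intro t
    rw [hΦ]
    exact aux_roabp_transfer σ (j.trans τ) sub0 b hbmono hb0 hbN hs' (hg (e t))
  · intro x
    rw [hΦ]
    exact aux_roabp_transfer σ (j.trans τ) sub0 b hbmono hb0 hbN hs'
      (hh (Sum.inl (τ.symm x)))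
  · have key := congrArg Φ heq
    rw [map_one, map_add, map_sum, map_sum] at key
    simp only [map_mul] at key
    rw [hA, hB] at key
    exact key
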